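/- Let $R$ be a Noetherian local domain dominated by a rank 1 valuation ring $V$ of its quotient field, with valuation $\nu$. Define $p(\hat R)_\infty \subset \hat R$ as the set of $f \in \hat R$ such that some (equivalently, every) Cauchy sequence $\{f_n\}$ in $R$ converging to $f$ satisfies: for all $\rho$ in the value group, $\nu(f_n) > \rho$ for $n \gg 0$. Then $p(\hat R)_\infty$ is a prime ideal of $\hat R$ and $p(\hat R)_\infty \cap R = (0)$. -/

import Mathlib

section

variable {R : Type*} [CommRing R] [IsDomain R] [IsNoetherianRing R] [IsLocalRing R]

/-- `c` is a Cauchy sequence in `R` for the `m_R`-adic topology. -/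
def IsAdicCauchy (c : ℕ → R) : Prop :=
  ∀ i : ℕ, ∃ N, ∀ m n, N ≤ m → N ≤ n → c m - c n ∈ (IsLocalRing.maximalIdeal R) ^ i

/-- The Cauchy sequence `c` in `R` converges to `f` in the `m_R`-adic completion `R̂`. -/
def ConvergesTo (c : ℕ → R)
    (f : AdicCompletion (IsLocalRing.maximalIdeal R) R) : Prop :=
  ∀ i : ℕ, ∃ N, ∀ n, N ≤ n →
    AdicCompletion.eval (IsLocalRing.maximalIdeal R) R i f = Submodule.Quotient.mk (c n)

/-- The sequence `c` has values increasing beyond every element of the value group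
("value `∞`"), where `ν` is an additive rank 1 valuation on `Frac R`. -/
def HasInfiniteValue (ν : FractionRing R → ℝ) (c : ℕ → R) : Prop :=
  ∀ ρ : ℝ, ∃ N, ∀ n, N ≤ n → c n = 0 ∨ ρ < ν (algebraMap R (FractionRing R) (c n))

open IsLocalRing in
/-- Let `R` be a Noetherian local domain dominated by a rank 1
valuation ring of its quotient field, with (additive, real-valued) valuation `ν`.
The set `p(R̂)_∞` of elements of the completion `R̂` admitting a Cauchy sequence from
`R` converging to them along which `ν` tends to infinity is a prime ideal of `R̂`
which contracts to `(0)` in `R`. -/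
theorem prime_ideal_of_elements_of_infinite_value
    (ν : FractionRing R → ℝ)
    (hmul : ∀ x y : FractionRing R, x ≠ 0 → y ≠ 0 → ν (x * y) = ν x + ν y)
    (hadd : ∀ x y : FractionRing R, x ≠ 0 → y ≠ 0 → x + y ≠ 0 →
      min (ν x) (ν y) ≤ ν (x + y))
    (hR : ∀ x : R, x ≠ 0 → 0 ≤ ν (algebraMap R (FractionRing R) x))
    (hm : ∀ x : R, x ∈ IsLocalRing.maximalIdeal R → x ≠ 0 →
      0 < ν (algebraMap R (FractionRing R) x)) :
    ∃ P : Ideal (AdicCompletion (IsLocalRing.maximalIdeal R) R),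
      (∀ f, f ∈ P ↔ ∃ c : ℕ → R, IsAdicCauchy c ∧ ConvergesTo c f ∧
        HasInfiniteValue ν c) ∧
      P.IsPrime ∧
      (∀ x : R, algebraMap R (AdicCompletion (IsLocalRing.maximalIdeal R) R) x ∈ P →
        x = 0) := by
  classical
  have hinj : Function.Injective (algebraMap R (FractionRing R)) :=
    IsFractionRing.injective R (FractionRing R)
  have hmap0 : ∀ x : R, x ≠ 0 → algebraMap R (FractionRing R) x ≠ 0 := fun x hx =>
    (map_ne_zero_iff _ hinj).mpr hx
  set w : R → ℝ := fun x => ν (algebraMap R (FractionRing R) x) with hwdef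
  -- basic facts about ν on K
  have hν1 : ν 1 = 0 := by
    have := hmul 1 1 one_ne_zero one_ne_zero
    simp only [mul_one] at this; linarith
  have hνm1 : ν (-1 : FractionRing R) = 0 := by
    have := hmul (-1 : FractionRing R) (-1) (by norm_num) (by norm_num)
    simp only [neg_mul, one_mul, neg_neg, hν1] at this; linarith
  have hνneg : ∀ u : FractionRing R, u ≠ 0 → ν (-u) = ν u := by
    intro u hu
    have := hmul (-1 : FractionRing R) u (by norm_num) hu
    rw [neg_one_mul] at this
    rw [this, hνm1, zero_add]
  -- transferred facts about w on R
  have hwmul : ∀ x y : R, x ≠ 0 → y ≠ 0 → w (x * y) = w x + w y := by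
    intro x y hx hy
    have := hmul _ _ (hmap0 x hx) (hmap0 y hy)
    simpa only [hwdef, map_mul] using this
  have hwadd : ∀ x y : R, x ≠ 0 → y ≠ 0 → x + y ≠ 0 →
      min (w x) (w y) ≤ w (x + y) := by
    intro x y hx hy hxy
    have := hadd _ _ (hmap0 x hx) (hmap0 y hy)
      (by rw [← map_add]; exact hmap0 _ hxy)
    simpa only [hwdef, map_add] using this
  have hwneg : ∀ x : R, x ≠ 0 → w (-x) = w x := by
    intro x hx
    show ν (algebraMap R (FractionRing R) (-x)) = ν (algebraMap R (FractionRing R) x)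
    rw [map_neg]
    exact hνneg _ (hmap0 x hx)
  have hwR : ∀ x : R, x ≠ 0 → 0 ≤ w x := hR
  -- "x + y keeps a lower bound" lemmas
  have hwsum : ∀ (x y : R) (c : ℝ), (x = 0 ∨ c ≤ w x) → (y = 0 ∨ c ≤ w y) →
      (x + y = 0 ∨ c ≤ w (x + y)) := by
    intro x y c hx hy
    rcases hx with rfl | hx
    · simpa using hy
    rcases hy with rfl | hy
    · simpa using Or.inr hx
    by_cases hx0 : x = 0
    · simpa [hx0] using Or.inr hy
    by_cases hy0 : y = 0
    · simpa [hy0] using Or.inr hx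
    by_cases h0 : x + y = 0
    · exact Or.inl h0
    · exact Or.inr (le_trans (le_min hx hy) (hwadd x y hx0 hy0 h0))
  have hwsumS : ∀ (x y : R) (c : ℝ), (x = 0 ∨ c < w x) → (y = 0 ∨ c < w y) →
      (x + y = 0 ∨ c < w (x + y)) := by
    intro x y c hx hy
    rcases hx with rfl | hx
    · simpa using hy
    rcases hy with rfl | hy
    · simpa using Or.inr hx
    by_cases hx0 : x = 0
    · simpa [hx0] using Or.inr hy
    by_cases hy0 : y = 0
    · simpa [hy0] using Or.inr hx
    by_cases h0 : x + y = 0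
    · exact Or.inl h0
    · exact Or.inr (lt_of_lt_of_le (lt_min hx hy) (hwadd x y hx0 hy0 h0))
  -- domination: adding something of bigger value does not change the value
  have hwdom : ∀ x y : R, x ≠ 0 → y ≠ 0 → w x < w y →
      x + y ≠ 0 ∧ w (x + y) = w x := by
    intro x y hx hy hlt
    have hxy : x + y ≠ 0 := by
      intro h
      have hyx : y = -x := by linear_combination h
      rw [hyx, hwneg x hx] at hlt
      exact lt_irrefl _ hlt
    refine ⟨hxy, ?_⟩
    have h1 : w x ≤ w (x + y) := by
      have h := hwadd x y hx hy hxy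
      have hmin : min (w x) (w y) = w x := min_eq_left (le_of_lt hlt)
      linarith [hmin ▸ h]
    have h2 : min (w (x + y)) (w (-y)) ≤ w x := by
      have hsum : (x + y) + (-y) = x := by ring
      have h := hwadd (x + y) (-y) hxy (neg_ne_zero.mpr hy) (by rw [hsum]; exact hx)
      rw [hsum] at h
      exact h
    rw [hwneg y hy] at h2
    rcases le_total (w (x + y)) (w y) with h | h
    · rw [min_eq_left h] at h2; linarith
    · rw [min_eq_right h] at h2; linarith
  -- a uniform positive lower bound for values on the maximal ideal
  obtain ⟨ε, hε, hεm⟩ : ∃ ε : ℝ, 0 < ε ∧ ∀ x ∈ maximalIdeal R, x = 0 ∨ ε ≤ w x := by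
    obtain ⟨s, hs⟩ := IsNoetherian.noetherian (maximalIdeal R)
    set t := s.filter (fun x => x ≠ 0) with ht
    by_cases htne : t.Nonempty
    · refine ⟨t.inf' htne w, ?_, ?_⟩
      · rw [Finset.lt_inf'_iff]
        intro x hx
        rw [ht, Finset.mem_filter] at hx
        exact hm x (hs ▸ Submodule.subset_span hx.1) hx.2
      · intro x hx
        rw [← hs] at hx
        refine Submodule.span_induction (p := fun x _ => x = 0 ∨ t.inf' htne w ≤ w x)
          ?_ (Or.inl rfl) (fun a b _ _ ha hb => hwsum a b _ ha hb) ?_ hx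
        · intro g hg
          by_cases hg0 : g = 0
          · exact Or.inl hg0
          · exact Or.inr (Finset.inf'_le w (by rw [ht, Finset.mem_filter]; exact ⟨hg, hg0⟩))
        · intro a z _ hz
          by_cases ha0 : a = 0
          · exact Or.inl (by simp [ha0])
          by_cases hz0 : z = 0
          · exact Or.inl (by simp [hz0])
          rcases hz with rfl | hz
          · exact absurd rfl hz0
          refine Or.inr ?_
          rw [smul_eq_mul, hwmul a z ha0 hz0]
          have := hwR a ha0
          linarith
    · refine ⟨1, one_pos, fun x hx => Or.inl ?_⟩
      have hbot : maximalIdeal R = ⊥ := by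
        rw [← hs]
        apply Submodule.span_eq_bot.mpr
        intro g hg
        by_contra hg0
        exact htne ⟨g, by rw [ht, Finset.mem_filter]; exact ⟨hg, hg0⟩⟩
      simpa [hbot] using hx
  -- lower bounds on powers of the maximal ideal
  have hεpow : ∀ (i : ℕ) (x : R), x ∈ (maximalIdeal R) ^ i →
      x = 0 ∨ (i : ℝ) * ε ≤ w x := by
    intro i
    induction i with
    | zero =>
      intro x _
      by_cases hx : x = 0
      · exact Or.inl hx
      · exact Or.inr (by simpa using hwR x hx)
    | succ i ih =>
      intro x hx
      rw [pow_succ] at hx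
      refine Submodule.mul_induction_on hx ?_ (fun a b ha hb => hwsum a b _ ha hb)
      intro a ha b hb
      by_cases ha0 : a = 0
      · exact Or.inl (by simp [ha0])
      by_cases hb0 : b = 0
      · exact Or.inl (by simp [hb0])
      refine Or.inr ?_
      rcases ih a ha with rfl | hia
      · exact absurd rfl ha0
      rcases hεm b hb with rfl | hib
      · exact absurd rfl hb0
      rw [hwmul a b ha0 hb0]
      push_cast
      linarith
  -- quotient congruence
  have hmk : ∀ (i : ℕ) (x y : R),
      (Submodule.Quotient.mk x :
        R ⧸ ((maximalIdeal R) ^ i • ⊤ : Submodule R R)) = Submodule.Quotient.mk y ↔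
      x - y ∈ (maximalIdeal R) ^ i := by
    intro i x y
    rw [Submodule.Quotient.eq, smul_eq_mul, Ideal.mul_top]
  -- every element of the completion has a Cauchy sequence converging to it
  have hseq : ∀ f : AdicCompletion (maximalIdeal R) R,
      ∃ d : ℕ → R, IsAdicCauchy d ∧ ConvergesTo d f := by
    intro f
    choose d hd using fun i =>
      Submodule.Quotient.mk_surjective (((maximalIdeal R) ^ i • ⊤ : Submodule R R))
        (AdicCompletion.eval (maximalIdeal R) R i f)
    have key : ∀ i n : ℕ, i ≤ n → d n - d i ∈ (maximalIdeal R) ^ i := by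
      intro i n hin
      rw [← hmk i]
      have h1 : (Submodule.Quotient.mk (d n) :
          R ⧸ ((maximalIdeal R) ^ i • ⊤ : Submodule R R)) =
          AdicCompletion.eval (maximalIdeal R) R i f := by
        calc (Submodule.Quotient.mk (d n) :
            R ⧸ ((maximalIdeal R) ^ i • ⊤ : Submodule R R))
            = AdicCompletion.transitionMap (maximalIdeal R) R hin
              (Submodule.Quotient.mk (d n)) :=
              rfl
          _ = AdicCompletion.transitionMap (maximalIdeal R) R hin
              (AdicCompletion.eval (maximalIdeal R) R n f) := by rw [hd n]
          _ = AdicCompletion.eval (maximalIdeal R) R i f := by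
              rw [AdicCompletion.eval_apply, AdicCompletion.transitionMap_comp_eval_apply,
                ← AdicCompletion.eval_apply]
      rw [h1, ← hd i]
    refine ⟨d, ?_, ?_⟩
    · intro i
      refine ⟨i, fun a b ha hb => ?_⟩
      have h1 := key i a ha
      have h2 := key i b hb
      have : d a - d b = (d a - d i) - (d b - d i) := by ring
      rw [this]
      exact sub_mem h1 h2
    · intro i
      refine ⟨i, fun n hn => ?_⟩
      rw [← hd i]
      rw [hmk i]
      have := key i n hn
      have h2 : d i - d n = -(d n - d i) := by ring
      rw [h2]
      exact neg_mem this
  -- infinitude of value only depends on the limit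
  have hsame : ∀ (f : AdicCompletion (maximalIdeal R) R) (c c' : ℕ → R),
      ConvergesTo c f → ConvergesTo c' f → HasInfiniteValue ν c →
      HasInfiniteValue ν c' := by
    intro f c c' hc hc' hinf ρ
    obtain ⟨i, hi⟩ : ∃ i : ℕ, ρ < (i : ℝ) * ε := by
      obtain ⟨i, hi⟩ := exists_nat_gt (ρ / ε)
      exact ⟨i, by rwa [div_lt_iff₀ hε] at hi⟩
    obtain ⟨N1, h1⟩ := hc i
    obtain ⟨N2, h2⟩ := hc' i
    obtain ⟨N3, h3⟩ := hinf ρ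
    refine ⟨max N1 (max N2 N3), fun n hn => ?_⟩
    have hn1 : N1 ≤ n := le_trans (le_max_left _ _) hn
    have hn2 : N2 ≤ n := le_trans (le_trans (le_max_left _ _) (le_max_right _ _)) hn
    have hn3 : N3 ≤ n := le_trans (le_trans (le_max_right _ _) (le_max_right _ _)) hn
    have hd : c' n - c n ∈ (maximalIdeal R) ^ i :=
      (hmk i _ _).mp ((h2 n hn2).symm.trans (h1 n hn1))
    have e1 : c n = 0 ∨ ρ < w (c n) := h3 n hn3
    have e2 : c' n - c n = 0 ∨ ρ < w (c' n - c n) := by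
      rcases hεpow i _ hd with h | h
      · exact Or.inl h
      · exact Or.inr (lt_of_lt_of_le hi h)
    have := hwsumS (c n) (c' n - c n) ρ e1 e2
    rw [add_sub_cancel] at this
    exact this
  -- products of Cauchy sequences
  have hprod : ∀ (f g : AdicCompletion (maximalIdeal R) R) (d e : ℕ → R),
      IsAdicCauchy d → ConvergesTo d f → IsAdicCauchy e → ConvergesTo e g →
      IsAdicCauchy (fun n => d n * e n) ∧ ConvergesTo (fun n => d n * e n) (f * g) := by
    intro f g d e hd1 hd2 he1 he2
    constructor
    · intro i
      obtain ⟨N1, h1⟩ := hd1 i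
      obtain ⟨N2, h2⟩ := he1 i
      refine ⟨max N1 N2, fun a b ha hb => ?_⟩
      have ha1 : N1 ≤ a := le_trans (le_max_left _ _) ha
      have ha2 : N2 ≤ a := le_trans (le_max_right _ _) ha
      have hb1 : N1 ≤ b := le_trans (le_max_left _ _) hb
      have hb2 : N2 ≤ b := le_trans (le_max_right _ _) hb
      have : d a * e a - d b * e b = d a * (e a - e b) + (d a - d b) * e b := by ring
      show d a * e a - d b * e b ∈ (maximalIdeal R) ^ i
      rw [this]
      exact add_mem (Ideal.mul_mem_left _ _ (h2 a b ha2 hb2))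
        (Ideal.mul_mem_right _ _ (h1 a b ha1 hb1))
    · intro i
      obtain ⟨N1, h1⟩ := hd2 i
      obtain ⟨N2, h2⟩ := he2 i
      refine ⟨max N1 N2, fun n hn => ?_⟩
      have hn1 : N1 ≤ n := le_trans (le_max_left _ _) hn
      have hn2 : N2 ≤ n := le_trans (le_max_right _ _) hn
      show AdicCompletion.eval (maximalIdeal R) R i (f * g) = Submodule.Quotient.mk (d n * e n)
      have : AdicCompletion.eval (maximalIdeal R) R i (f * g) =
          AdicCompletion.eval (maximalIdeal R) R i f *
          AdicCompletion.eval (maximalIdeal R) R i g := rfl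
      rw [this, h1 n hn1, h2 n hn2]
      rfl
  -- the ideal P
  let P : Ideal (AdicCompletion (maximalIdeal R) R) :=
    { carrier := {f | ∃ c : ℕ → R, IsAdicCauchy c ∧ ConvergesTo c f ∧ HasInfiniteValue ν c}
      zero_mem' := by
        refine ⟨fun _ => 0, fun i => ⟨0, fun a b _ _ => by simp⟩,
          fun i => ⟨0, fun n _ => by simp⟩, fun ρ => ⟨0, fun n _ => Or.inl rfl⟩⟩
      add_mem' := by
        rintro a b ⟨c, hc1, hc2, hc3⟩ ⟨c', hc1', hc2', hc3'⟩
        refine ⟨fun n => c n + c' n, ?_, ?_, ?_⟩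
        · intro i
          obtain ⟨N1, h1⟩ := hc1 i
          obtain ⟨N2, h2⟩ := hc1' i
          refine ⟨max N1 N2, fun p q hp hq => ?_⟩
          have : c p + c' p - (c q + c' q) = (c p - c q) + (c' p - c' q) := by ring
          show c p + c' p - (c q + c' q) ∈ (maximalIdeal R) ^ i
          rw [this]
          exact add_mem (h1 p q (le_trans (le_max_left _ _) hp) (le_trans (le_max_left _ _) hq))
            (h2 p q (le_trans (le_max_right _ _) hp) (le_trans (le_max_right _ _) hq))
        · intro i
          obtain ⟨N1, h1⟩ := hc2 i
          obtain ⟨N2, h2⟩ := hc2' i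
          refine ⟨max N1 N2, fun n hn => ?_⟩
          show AdicCompletion.eval (maximalIdeal R) R i (a + b) =
            Submodule.Quotient.mk (c n + c' n)
          rw [map_add, h1 n (le_trans (le_max_left _ _) hn),
            h2 n (le_trans (le_max_right _ _) hn), ← Submodule.Quotient.mk_add]
        · intro ρ
          obtain ⟨N1, h1⟩ := hc3 ρ
          obtain ⟨N2, h2⟩ := hc3' ρ
          refine ⟨max N1 N2, fun n hn => ?_⟩
          exact hwsumS (c n) (c' n) ρ (h1 n (le_trans (le_max_left _ _) hn))
            (h2 n (le_trans (le_max_right _ _) hn))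
      smul_mem' := by
        rintro r f ⟨c, hc1, hc2, hc3⟩
        obtain ⟨d, hd1, hd2⟩ := hseq r
        obtain ⟨hp1, hp2⟩ := hprod r f d c hd1 hd2 hc1 hc2
        refine ⟨fun n => d n * c n, hp1, by rw [smul_eq_mul]; exact hp2, ?_⟩
        intro ρ
        obtain ⟨N, hN⟩ := hc3 ρ
        refine ⟨N, fun n hn => ?_⟩
        by_cases hd0 : d n = 0
        · exact Or.inl (by simp [hd0])
        by_cases hc0 : c n = 0
        · exact Or.inl (by simp [hc0])
        rcases hN n hn with h | h
        · exact absurd h hc0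
        refine Or.inr ?_
        show ρ < w (d n * c n)
        rw [hwmul (d n) (c n) hd0 hc0]
        have := hwR (d n) hd0
        have hcn : ρ < w (c n) := h
        linarith }
  -- contraction to R is zero
  have hcontr : ∀ x : R,
      (∃ c : ℕ → R, IsAdicCauchy c ∧
        ConvergesTo c (algebraMap R (AdicCompletion (maximalIdeal R) R) x) ∧
        HasInfiniteValue ν c) → x = 0 := by
    rintro x ⟨c, hc1, hc2, hc3⟩
    by_contra hx
    obtain ⟨i, hi⟩ : ∃ i : ℕ, w x < (i : ℝ) * ε := by
      obtain ⟨i, hi⟩ := exists_nat_gt (w x / ε)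
      exact ⟨i, by rwa [div_lt_iff₀ hε] at hi⟩
    obtain ⟨N1, h1⟩ := hc2 i
    obtain ⟨N2, h2⟩ := hc3 (w x)
    set n := max N1 N2 with hn
    have hev : (Submodule.Quotient.mk x :
        R ⧸ ((maximalIdeal R) ^ i • ⊤ : Submodule R R)) = Submodule.Quotient.mk (c n) :=
      h1 n (le_max_left _ _)
    have hd : x - c n ∈ (maximalIdeal R) ^ i := (hmk i _ _).mp hev
    rcases h2 n (le_max_right _ _) with h | h
    · rw [h, sub_zero] at hd
      rcases hεpow i x hd with h' | h'
      · exact hx h'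
      · linarith
    · have hcw : w x < w (c n) := h
      rcases hεpow i _ hd with h' | h'
      · rw [sub_eq_zero] at h'
        rw [← h'] at hcw
        exact lt_irrefl _ hcw
      · have := hwsumS (x - c n) (c n) (w x)
          (Or.inr (lt_of_lt_of_le hi h')) (Or.inr hcw)
        rw [sub_add_cancel] at this
        rcases this with h'' | h''
        · exact hx h''
        · exact lt_irrefl _ h''
  -- elements not in P have a well-defined (eventually constant) value
  have hstab : ∀ f : AdicCompletion (maximalIdeal R) R,
      (¬ ∃ c : ℕ → R, IsAdicCauchy c ∧ ConvergesTo c f ∧ HasInfiniteValue ν c) →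
      ∃ (d : ℕ → R) (v : ℝ) (N : ℕ), IsAdicCauchy d ∧ ConvergesTo d f ∧
        ∀ n, N ≤ n → d n ≠ 0 ∧ w (d n) = v := by
    intro f hf
    obtain ⟨d, hd1, hd2⟩ := hseq f
    have hni : ¬ HasInfiniteValue ν d := fun h => hf ⟨d, hd1, hd2, h⟩
    rw [HasInfiniteValue] at hni
    push_neg at hni
    obtain ⟨ρ, hρ⟩ := hni
    obtain ⟨i, hi⟩ : ∃ i : ℕ, ρ < (i : ℝ) * ε := by
      obtain ⟨i, hi⟩ := exists_nat_gt (ρ / ε)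
      exact ⟨i, by rwa [div_lt_iff₀ hε] at hi⟩
    obtain ⟨N, hN⟩ := hd1 i
    obtain ⟨n0, hn0, hn0ne, hn0le⟩ := hρ N
    refine ⟨d, w (d n0), N, hd1, hd2, fun n hn => ?_⟩
    have hdd : d n - d n0 ∈ (maximalIdeal R) ^ i := hN n n0 hn hn0
    by_cases h0 : d n - d n0 = 0
    · rw [sub_eq_zero] at h0
      rw [h0]
      exact ⟨hn0ne, rfl⟩
    · rcases hεpow i _ hdd with h | h
      · exact absurd h h0
      have hlt : w (d n0) < w (d n - d n0) := by
        have hle : w (d n0) ≤ ρ := hn0le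
        linarith
      have hcomb := hwdom (d n0) (d n - d n0) hn0ne h0 hlt
      have he : d n0 + (d n - d n0) = d n := by ring
      rw [he] at hcomb
      exact hcomb
  refine ⟨P, fun f => Iff.rfl, ⟨?_, ?_⟩, fun x hx => hcontr x hx⟩
  · -- P ≠ ⊤
    intro hP
    have h1 : (1 : AdicCompletion (maximalIdeal R) R) ∈ P := hP ▸ Submodule.mem_top
    have : (1 : R) = 0 := hcontr 1 (by rw [map_one]; exact h1)
    exact one_ne_zero this
  · -- primality
    intro f g hfg
    by_contra hcon
    push_neg at hcon
    obtain ⟨hf, hg⟩ := hcon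
    obtain ⟨d, vf, Nf, hd1, hd2, hdf⟩ := hstab f hf
    obtain ⟨e, vg, Ng, he1, he2, heg⟩ := hstab g hg
    obtain ⟨hp1, hp2⟩ := hprod f g d e hd1 hd2 he1 he2
    obtain ⟨c, hc1, hc2, hc3⟩ := hfg
    have hinf : HasInfiniteValue ν (fun n => d n * e n) :=
      hsame (f * g) c _ hc2 hp2 hc3
    obtain ⟨N, hN⟩ := hinf (vf + vg)
    set n := max N (max Nf Ng) with hn
    obtain ⟨hne, hve⟩ := hdf n (le_trans (le_max_left _ _) (le_max_right _ _))
    obtain ⟨hne', hve'⟩ := heg n (le_trans (le_max_right _ _) (le_max_right _ _))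
    rcases hN n (le_max_left _ _) with h | h
    · exact (mul_ne_zero hne hne') h
    · have h' : vf + vg < w (d n * e n) := h
      rw [hwmul (d n) (e n) hne hne', hve, hve'] at h'
      exact lt_irrefl _ h'



end
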